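/- Let 0 < r ≤ 1 and define I(t) = (t+2r)²/(4r) for t < −2r, I(t) = (t+2r)²/(8r) for |t| ≤ 2r, and I(t) = (t+2r)²/(4r) − t for t > 2r. Then 1/2 + max(0, sup_{t ≥ 0} { t − I(t) + min(1, I(t))/2 }) equals (3/2)r + 1/2 if r ≤ 1/5, equals √(1 − (1−2r)²) if 1/5 < r ≤ 1/2, and equals 1 if 1/2 < r ≤ 1. -/

import Mathlib

set_option maxHeartbeats 1000000 in
theorem stmt9 (r : ℝ) (hr0 : 0 < r) (hr1 : r ≤ 1) (I : ℝ → ℝ)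
    (hI1 : ∀ t : ℝ, t < -(2 * r) → I t = (t + 2 * r) ^ 2 / (4 * r))
    (hI2 : ∀ t : ℝ, |t| ≤ 2 * r → I t = (t + 2 * r) ^ 2 / (8 * r))
    (hI3 : ∀ t : ℝ, 2 * r < t → I t = (t + 2 * r) ^ 2 / (4 * r) - t) :
    (r ≤ 1 / 5 →
      1 / 2 + max 0 (sSup ((fun t : ℝ => t - I t + min 1 (I t) / 2) '' Set.Ici 0))
        = 3 / 2 * r + 1 / 2) ∧
    (1 / 5 < r → r ≤ 1 / 2 →
      1 / 2 + max 0 (sSup ((fun t : ℝ => t - I t + min 1 (I t) / 2) '' Set.Ici 0))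
        = Real.sqrt (1 - (1 - 2 * r) ^ 2)) ∧
    (1 / 2 < r →
      1 / 2 + max 0 (sSup ((fun t : ℝ => t - I t + min 1 (I t) / 2) '' Set.Ici 0))
        = 1) := by
  have h4r : (0:ℝ) < 4 * r := by linarith
  have h8r : (0:ℝ) < 8 * r := by linarith
  set g : ℝ → ℝ := fun t => t - I t + min 1 (I t) / 2 with hg
  have hIA : ∀ t : ℝ, 0 ≤ t → t ≤ 2 * r → I t * (8 * r) = (t + 2 * r) ^ 2 := by
    intro t ht0 ht1
    rw [hI2 t (by rw [abs_of_nonneg ht0]; exact ht1)]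
    field_simp
  have hIB : ∀ t : ℝ, 2 * r < t → I t * (4 * r) = t ^ 2 + 4 * r ^ 2 := by
    intro t ht
    rw [hI3 t ht]
    field_simp
    ring
  have hb1 : ∀ t : ℝ, g t ≤ t - I t + 1 / 2 := by
    intro t
    have : min 1 (I t) ≤ 1 := min_le_left _ _
    simp only [hg]
    linarith
  have hb2 : ∀ t : ℝ, g t ≤ t - I t / 2 := by
    intro t
    have : min 1 (I t) ≤ I t := min_le_right _ _
    simp only [hg]
    linarith
  have key : ∀ M : ℝ, IsGreatest (g '' Set.Ici 0) M → sSup (g '' Set.Ici 0) = M :=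
    fun M h => h.csSup_eq
  refine ⟨?_, ?_, ?_⟩
  · -- r ≤ 1/5
    intro hr5
    have hIval : I (4 * r) = 5 * r := by
      rw [hI3 (4 * r) (by linarith)]
      field_simp
      ring
    have hgval : g (4 * r) = 3 / 2 * r := by
      simp only [hg]
      rw [hIval, min_eq_right (by linarith : 5 * r ≤ 1)]
      ring
    have hgr : IsGreatest (g '' Set.Ici 0) (3 / 2 * r) := by
      constructor
      · exact ⟨4 * r, Set.mem_Ici.2 (by linarith), hgval⟩
      · rintro x ⟨t, ht, rfl⟩
        simp only [Set.mem_Ici] at ht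
        rcases le_or_gt t (2 * r) with hA | hB
        · have hm := hIA t ht hA
          have hb := hb2 t
          have h2 : t - I t / 2 ≤ 3 / 2 * r := by
            nlinarith [hm, mul_nonneg (by linarith : (0:ℝ) ≤ 2 * r - t) (by linarith : (0:ℝ) ≤ 10 * r - t)]
          linarith
        · have hm := hIB t hB
          have hb := hb2 t
          have h2 : t - I t / 2 ≤ 3 / 2 * r := by
            nlinarith [hm, sq_nonneg (t - 4 * r)]
          linarith
    rw [key _ hgr, max_eq_right (by linarith : (0:ℝ) ≤ 3 / 2 * r)]
    ring
  · -- 1/5 < r ≤ 1/2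
    intro hr5 hr2
    obtain ⟨s, hsdef⟩ : ∃ s : ℝ, s = Real.sqrt (1 - (1 - 2 * r) ^ 2) := ⟨_, rfl⟩
    rw [← hsdef]
    have hs0 : 0 ≤ s := hsdef ▸ Real.sqrt_nonneg _
    have hs2 : s ^ 2 = 1 - (1 - 2 * r) ^ 2 := by
      rw [hsdef]; exact Real.sq_sqrt (by nlinarith)
    have hs2r : 2 * r ≤ s := by
      have h1 : Real.sqrt ((2 * r) ^ 2) ≤ Real.sqrt (1 - (1 - 2 * r) ^ 2) :=
        Real.sqrt_le_sqrt (by nlinarith)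
      rwa [Real.sqrt_sq (by linarith), ← hsdef] at h1
    have hs12 : 1 / 2 ≤ s := by
      have h1 : Real.sqrt ((1 / 2) ^ 2) ≤ Real.sqrt (1 - (1 - 2 * r) ^ 2) :=
        Real.sqrt_le_sqrt (by nlinarith [mul_nonneg (by linarith : (0:ℝ) ≤ r - 1/5) (by linarith : (0:ℝ) ≤ 1/2 - r)])
      rwa [Real.sqrt_sq (by norm_num), ← hsdef] at h1
    have hs4r : s ≤ 4 * r := by
      have h1 : Real.sqrt (1 - (1 - 2 * r) ^ 2) ≤ Real.sqrt ((4 * r) ^ 2) :=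
        Real.sqrt_le_sqrt (by nlinarith)
      rwa [Real.sqrt_sq (by linarith), ← hsdef] at h1
    have hIs : I s = 1 := by
      rcases hs2r.lt_or_eq with h | h
      · rw [hI3 s h]
        have he : (s + 2 * r) ^ 2 = 4 * r * (1 + s) := by nlinarith
        rw [he]
        field_simp
        ring
      · have hr' : r = 1 / 2 := by nlinarith
        rw [hI2 s (by rw [abs_of_nonneg hs0]; linarith)]
        rw [← h, hr']
        norm_num
    have hgval : g s = s - 1 / 2 := by
      simp only [hg]
      rw [hIs, min_self]
      ring
    have hgr : IsGreatest (g '' Set.Ici 0) (s - 1 / 2) := by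
      constructor
      · exact ⟨s, by simpa using hs0, hgval⟩
      · rintro x ⟨t, ht, rfl⟩
        simp only [Set.mem_Ici] at ht
        rcases le_or_gt t (2 * r) with hA | hB
        · have hm := hIA t ht hA
          have hb := hb2 t
          have h1 : r + 1 / 2 ≤ s := by
            have h3 : Real.sqrt ((r + 1 / 2) ^ 2) ≤ Real.sqrt (1 - (1 - 2 * r) ^ 2) :=
              Real.sqrt_le_sqrt (by nlinarith [mul_nonneg (by linarith : (0:ℝ) ≤ r - 1/10) (by linarith : (0:ℝ) ≤ 1/2 - r)])
            rwa [Real.sqrt_sq (by linarith), ← hsdef] at h3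
          have h2 : t - I t / 2 ≤ r := by
            nlinarith [hm, mul_nonneg (by linarith : (0:ℝ) ≤ 2 * r - t) (by linarith : (0:ℝ) ≤ 10 * r - t)]
          linarith
        · have hm := hIB t hB
          rcases le_or_gt t s with hts | hts
          · have hb := hb2 t
            have h2 : t - I t / 2 ≤ s - 1 / 2 := by
              nlinarith [hm, hs2, mul_nonneg (by linarith : (0:ℝ) ≤ s - t) (by linarith : (0:ℝ) ≤ 8 * r - t - s)]
            linarith
          · have hb := hb1 t
            have h2 : t - I t + 1 / 2 ≤ s - 1 / 2 := by
              nlinarith [hm, hs2, mul_nonneg (by linarith : (0:ℝ) ≤ t - s) (by linarith : (0:ℝ) ≤ t + s - 4 * r)]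
            linarith
    rw [key _ hgr, max_eq_right (by linarith : (0:ℝ) ≤ s - 1 / 2)]
    ring
  · -- 1/2 < r
    intro hr2
    have hIval : I (2 * r) = 2 * r := by
      rw [hI2 (2 * r) (by rw [abs_of_nonneg (by linarith)]; )]
      field_simp
      ring
    have hgval : g (2 * r) = 1 / 2 := by
      simp only [hg]
      rw [hIval, min_eq_left (by linarith : (1:ℝ) ≤ 2 * r)]
      ring
    have hgr : IsGreatest (g '' Set.Ici 0) (1 / 2) := by
      constructor
      · exact ⟨2 * r, Set.mem_Ici.2 (by linarith), hgval⟩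
      · rintro x ⟨t, ht, rfl⟩
        simp only [Set.mem_Ici] at ht
        rcases le_or_gt t (2 * r) with hA | hB
        · have hm := hIA t ht hA
          have hb := hb1 t
          have h2 : t - I t ≤ 0 := by nlinarith [hm, sq_nonneg (t - 2 * r)]
          linarith
        · have hm := hIB t hB
          have hb := hb1 t
          have h2 : t - I t ≤ 0 := by nlinarith [hm, sq_nonneg (t - 2 * r)]
          linarith
    rw [key _ hgr]
    norm_num
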